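/- For every integer θ ≥ 2 and every real γ̄ > 0, sup_{γ ∈ (0,γ̄]} | (θ!/γ^θ)·b^{θ/(θ−1)}·Bin(b, γ·b^{−θ/(θ−1)}, θ) − 1 | → 0 as the integer b → ∞; that is, (θ!/γ^θ)·b^{θ/(θ−1)}·Bin(b, γ·b^{−θ/(θ−1)}, θ) → 1 uniformly in γ ∈ (0,γ̄]. -/

import Mathlib

/-- Bin(κ,x,θ) = ∑_{i=θ}^{κ} (κ choose i) x^i (1−x)^{κ−i}. -/
noncomputable def binTail (κ : ℕ) (x : ℝ) (θ : ℕ) : ℝ :=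
  ∑ i ∈ Finset.Icc θ κ, (κ.choose i : ℝ) * x ^ i * (1 - x) ^ (κ - i)

/-- Bin with the convention Bin(κ,x,θ) = 1 for x > 1. -/
noncomputable def binTailExt (κ : ℕ) (x : ℝ) (θ : ℕ) : ℝ :=
  if x ≤ 1 then binTail κ x θ else 1

open Finset

lemma binTail_lower (b θ : ℕ) (hθb : θ ≤ b) (x : ℝ) (hx0 : 0 ≤ x) (hx1 : x ≤ 1) :
    (b.choose θ : ℝ) * x ^ θ * (1 - b * x) ≤ binTail b x θ := by
  have hmem : θ ∈ Finset.Icc θ b := by simp [hθb]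
  have hterm : (b.choose θ : ℝ) * x ^ θ * (1 - b * x)
      ≤ (b.choose θ : ℝ) * x ^ θ * (1 - x) ^ (b - θ) := by
    apply mul_le_mul_of_nonneg_left _ (by positivity)
    have h1 : (1 : ℝ) - b * x ≤ 1 - (b - θ : ℕ) * x := by
      have : ((b - θ : ℕ) : ℝ) * x ≤ (b : ℝ) * x :=
        mul_le_mul_of_nonneg_right (by exact_mod_cast Nat.cast_le.mpr (Nat.sub_le b θ)) hx0
      linarith
    have h2 : (1 : ℝ) - (b - θ : ℕ) * x ≤ (1 - x) ^ (b - θ) := by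
      have := one_add_mul_le_pow (a := -x) (by linarith) (b - θ)
      calc (1 : ℝ) - (b - θ : ℕ) * x = 1 + (b - θ : ℕ) * (-x) := by ring
        _ ≤ (1 + -x) ^ (b - θ) := this
        _ = (1 - x) ^ (b - θ) := by ring_nf
    linarith
  refine hterm.trans ?_
  exact Finset.single_le_sum
    (f := fun i => (b.choose i : ℝ) * x ^ i * (1 - x) ^ (b - i))
    (fun i _ => mul_nonneg (mul_nonneg (Nat.cast_nonneg _) (pow_nonneg hx0 _))
      (pow_nonneg (by linarith) _)) hmem

lemma binTail_upper (b θ : ℕ) (hθb : θ ≤ b) (x : ℝ) (hx0 : 0 ≤ x) (hx1 : x ≤ 1)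
    (hbx : (b : ℝ) * x < 1) :
    binTail b x θ ≤ (b : ℝ) ^ θ * x ^ θ / θ.factorial / (1 - b * x) := by
  have hbx0 : 0 ≤ (b : ℝ) * x := by positivity
  have key : ∀ i ∈ Finset.Icc θ b,
      (b.choose i : ℝ) * x ^ i * (1 - x) ^ (b - i)
        ≤ (b : ℝ) ^ θ * x ^ θ / θ.factorial * ((b : ℝ) * x) ^ (i - θ) := by
    intro i hi
    simp only [Finset.mem_Icc] at hi
    have h1 : (b.choose i : ℝ) * x ^ i * (1 - x) ^ (b - i) ≤ (b.choose i : ℝ) * x ^ i := by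
      have : (1 - x) ^ (b - i) ≤ 1 := pow_le_one₀ (by linarith) (by linarith)
      nlinarith [mul_nonneg (Nat.cast_nonneg (b.choose i)) (pow_nonneg hx0 i)]
    refine h1.trans ?_
    have h2 : (b.choose i : ℝ) ≤ (b : ℝ) ^ i / θ.factorial := by
      refine (Nat.choose_le_pow_div i b).trans ?_
      apply div_le_div_of_nonneg_left (by positivity)
        (by positivity) (by exact_mod_cast Nat.factorial_le hi.1)
    calc (b.choose i : ℝ) * x ^ i ≤ (b : ℝ) ^ i / θ.factorial * x ^ i := by
          exact mul_le_mul_of_nonneg_right h2 (by positivity)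
      _ = (b : ℝ) ^ θ * x ^ θ / θ.factorial * ((b : ℝ) * x) ^ (i - θ) := by
          rw [mul_pow]
          have hiθ : i = θ + (i - θ) := by omega
          rw [hiθ, pow_add, pow_add]
          field_simp
          rw [Nat.add_sub_cancel_left]
          ring
  have hsum := Finset.sum_le_sum key
  rw [binTail]
  refine hsum.trans ?_
  rw [← Finset.mul_sum]
  have hgeom : ∑ i ∈ Finset.Icc θ b, ((b : ℝ) * x) ^ (i - θ) ≤ 1 / (1 - b * x) := by
    have : ∑ i ∈ Finset.Icc θ b, ((b : ℝ) * x) ^ (i - θ)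
        = ∑ k ∈ Finset.range (b + 1 - θ), ((b : ℝ) * x) ^ k := by
      rw [← Finset.Ico_add_one_right_eq_Icc, Finset.sum_Ico_eq_sum_range]
      exact Finset.sum_congr rfl fun k _ => by congr 1; omega
    rw [this]
    rcases eq_or_ne ((b:ℝ) * x) 1 with h1 | h1
    · exact absurd h1 (ne_of_lt hbx)
    rw [le_div_iff₀ (by linarith)]
    have hm := geom_sum_mul (x := (b : ℝ) * x) (b + 1 - θ)
    have hpow : 0 ≤ ((b : ℝ) * x) ^ (b + 1 - θ) := by positivity
    have heq : (∑ k ∈ Finset.range (b + 1 - θ), ((b : ℝ) * x) ^ k) * (1 - (b : ℝ) * x)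
        = 1 - ((b : ℝ) * x) ^ (b + 1 - θ) := by linear_combination -hm
    linarith
  calc (b:ℝ) ^ θ * x ^ θ / θ.factorial * ∑ i ∈ Finset.Icc θ b, ((b : ℝ) * x) ^ (i - θ)
      ≤ (b:ℝ) ^ θ * x ^ θ / θ.factorial * (1 / (1 - b * x)) := by
        exact mul_le_mul_of_nonneg_left hgeom (by positivity)
    _ = (b : ℝ) ^ θ * x ^ θ / θ.factorial / (1 - b * x) := by ring


set_option maxHeartbeats 1000000 in
open Filter in
/-- (θ!/γ^θ)·b^{θ/(θ−1)}·Bin(b, γ·b^{−θ/(θ−1)}, θ) → 1 as b → ∞,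
uniformly in γ ∈ (0, γ̄]. -/
theorem stmt12 (θ : ℕ) (hθ : 2 ≤ θ) (γbar : ℝ) (hγbar : 0 < γbar) :
    ∀ ε : ℝ, 0 < ε → ∃ B : ℕ, ∀ b : ℕ, B ≤ b → ∀ γ ∈ Set.Ioc (0:ℝ) γbar,
      |((θ.factorial : ℝ) / γ ^ θ)
          * (b : ℝ) ^ ((θ : ℝ) / ((θ : ℝ) - 1))
          * binTailExt b (γ * (b : ℝ) ^ (-(θ : ℝ) / ((θ : ℝ) - 1))) θ
        - 1| < ε := by
  intro ε hε
  have hθ1 : (1 : ℝ) < (θ : ℝ) := by exact_mod_cast Nat.lt_of_lt_of_le one_lt_two hθ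
  have hθm1 : (0 : ℝ) < (θ : ℝ) - 1 := by linarith
  obtain ⟨δ, hδdef⟩ : ∃ d : ℝ, d = min (1/2) (ε/3) := ⟨_, rfl⟩
  have hδ0 : 0 < δ := hδdef ▸ lt_min (by norm_num) (by linarith)
  have hδhalf : δ ≤ 1/2 := hδdef ▸ min_le_left _ _
  have hδε : δ ≤ ε/3 := hδdef ▸ min_le_right _ _
  -- eventual conditions
  have h1 : Tendsto (fun b : ℕ => γbar * (b : ℝ) ^ (-(1/((θ:ℝ)-1)))) atTop (nhds 0) := by
    have := (tendsto_rpow_neg_atTop (y := 1/((θ:ℝ)-1)) (by positivity)).comp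
      tendsto_natCast_atTop_atTop
    simpa using this.const_mul γbar
  have ev1 : ∀ᶠ b : ℕ in atTop, γbar * (b : ℝ) ^ (-(1/((θ:ℝ)-1))) ≤ δ :=
    (h1.eventually_lt_const hδ0).mono fun b hb => hb.le
  have ev2 : ∀ᶠ b : ℕ in atTop, (θ:ℝ)^2 ≤ δ * b := by
    have ht : Tendsto (fun b : ℕ => δ * (b:ℝ)) atTop atTop :=
      (tendsto_natCast_atTop_atTop).const_mul_atTop hδ0
    exact ht.eventually_ge_atTop _
  have ev3 : ∀ᶠ b : ℕ in atTop, θ ≤ b := eventually_ge_atTop θ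
  obtain ⟨B, hB⟩ := eventually_atTop.mp ((ev1.and ev2).and ev3)
  refine ⟨B, fun b hb γ hγ => ?_⟩
  obtain ⟨⟨hc1, hc2⟩, hθb⟩ := hB b hb
  have hb1 : 1 ≤ b := le_trans (by omega) hθb
  have hbpos : (0:ℝ) < b := by exact_mod_cast Nat.lt_of_lt_of_le Nat.zero_lt_one hb1
  obtain ⟨hγ0, hγbar'⟩ := hγ
  obtain ⟨A, hAdef⟩ : ∃ a : ℝ, a = -(θ:ℝ) / ((θ:ℝ) - 1) := ⟨_, rfl⟩
  obtain ⟨x, hxdef⟩ : ∃ t : ℝ, t = γ * (b:ℝ) ^ A := ⟨_, rfl⟩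
  obtain ⟨y, hydef⟩ : ∃ t : ℝ, t = (b:ℝ) ^ A := ⟨_, rfl⟩
  obtain ⟨β, hβdef⟩ : ∃ t : ℝ, t = (b:ℝ) ^ ((θ:ℝ)/((θ:ℝ)-1)) := ⟨_, rfl⟩
  have hypos : 0 < y := hydef ▸ Real.rpow_pos_of_pos hbpos A
  have hβpos : 0 < β := hβdef ▸ Real.rpow_pos_of_pos hbpos _
  have hxy : x = γ * y := by rw [hxdef, hydef]
  have hx0 : 0 < x := by rw [hxy]; positivity
  -- b * x
  have hbx_eq : (b:ℝ) * x = γ * (b:ℝ) ^ (-(1/((θ:ℝ)-1))) := by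
    rw [hxdef]
    rw [show (b:ℝ) * (γ * (b:ℝ)^A) = γ * ((b:ℝ)^(1:ℝ) * (b:ℝ)^A) by
      rw [Real.rpow_one]; ring]
    rw [← Real.rpow_add hbpos]
    rw [show (1:ℝ) + A = -(1/((θ:ℝ)-1)) by rw [hAdef]; field_simp; ring]
  have hbxδ : (b:ℝ) * x ≤ δ := by
    rw [hbx_eq]
    refine le_trans ?_ hc1
    exact mul_le_mul_of_nonneg_right hγbar' (Real.rpow_pos_of_pos hbpos _).le
  have hbx0 : 0 ≤ (b:ℝ) * x := by positivity
  have hbx1 : (b:ℝ) * x < 1 := lt_of_le_of_lt hbxδ (by linarith)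
  have hx1 : x ≤ 1 := by
    have : x ≤ (b:ℝ) * x := le_mul_of_one_le_left hx0.le (by exact_mod_cast hb1)
    linarith
  have h1bx : (0:ℝ) < 1 - (b:ℝ)*x := by linarith
  -- key exponent identity
  have hbθne : ((b:ℝ)^θ) ≠ 0 := by positivity
  have hE : β * y^θ = ((b:ℝ)^θ)⁻¹ := by
    rw [hβdef, hydef, ← Real.rpow_natCast ((b:ℝ)^A) θ, ← Real.rpow_mul hbpos.le,
      ← Real.rpow_add hbpos]
    rw [show (θ:ℝ)/((θ:ℝ)-1) + A * θ = -(θ:ℝ) by rw [hAdef]; field_simp; ring]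
    rw [Real.rpow_neg hbpos.le, Real.rpow_natCast]
  have hγθ : γ ^ θ ≠ 0 := by positivity
  have hxθ : x ^ θ = γ ^ θ * y ^ θ := by rw [hxy, mul_pow]
  have hfac : (0:ℝ) < (θ.factorial : ℝ) := by exact_mod_cast θ.factorial_pos
  obtain ⟨Q, hQdef⟩ : ∃ q : ℝ,
      q = ((θ.factorial : ℝ) / γ ^ θ) * β * binTail b x θ := ⟨_, rfl⟩
  have hcpos : 0 < ((θ.factorial : ℝ) / γ ^ θ) * β := by positivity
  -- lower bound
  have hdesc : (b.descFactorial θ : ℝ) = (θ.factorial : ℝ) * (b.choose θ) := by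
    exact_mod_cast Nat.descFactorial_eq_factorial_mul_choose b θ
  have hQlow : ((b.descFactorial θ : ℝ) / (b:ℝ)^θ) * (1 - (b:ℝ)*x) ≤ Q := by
    have h := binTail_lower b θ hθb x hx0.le hx1
    have h2 := mul_le_mul_of_nonneg_left h hcpos.le
    rw [hQdef]
    refine le_trans (le_of_eq ?_) h2
    rw [hdesc, hxθ]
    calc ((θ.factorial : ℝ) * (b.choose θ : ℝ)) / (b:ℝ)^θ * (1 - (b:ℝ)*x)
        = ((θ.factorial:ℝ) * (b.choose θ:ℝ)) * ((b:ℝ)^θ)⁻¹ * (1 - (b:ℝ)*x) := by ring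
      _ = ((θ.factorial:ℝ) * (b.choose θ:ℝ)) * (β * y^θ) * (1 - (b:ℝ)*x) * (γ^θ/γ^θ) := by
          rw [div_self hγθ, hE, mul_one]
      _ = ((θ.factorial:ℝ)/γ^θ) * β * ((b.choose θ:ℝ) * (γ^θ * y^θ) * (1 - (b:ℝ)*x)) := by
          field_simp
  have hDlow : ((b:ℝ) - θ)^θ ≤ (b.descFactorial θ : ℝ) := by
    have h1 : ((b - θ)^θ : ℕ) ≤ b.descFactorial θ :=
      le_trans (Nat.pow_le_pow_left (by omega) θ) (Nat.pow_sub_le_descFactorial b θ)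
    calc ((b:ℝ) - θ)^θ = (((b - θ : ℕ)) : ℝ)^θ := by rw [Nat.cast_sub hθb]
      _ ≤ (b.descFactorial θ : ℝ) := by exact_mod_cast h1
  have hratio : 1 - δ ≤ (b.descFactorial θ : ℝ) / (b:ℝ)^θ := by
    have hb2 : ((b:ℝ) - θ)^θ / (b:ℝ)^θ = (1 - (θ:ℝ)/b)^θ := by
      rw [← div_pow]; congr 1; field_simp
    have hbern : 1 - (θ:ℝ)^2/b ≤ (1 - (θ:ℝ)/b)^θ := by
      have h := one_add_mul_le_pow (a := -((θ:ℝ)/b)) (by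
        have : (θ:ℝ)/b ≤ δ := by
          rw [div_le_iff₀ hbpos]; nlinarith
        linarith) θ
      calc 1 - (θ:ℝ)^2/b = 1 + (θ:ℕ) * (-((θ:ℝ)/b)) := by field_simp; ring
        _ ≤ (1 + -((θ:ℝ)/b))^θ := h
        _ = (1 - (θ:ℝ)/b)^θ := by ring_nf
    have hδb : 1 - δ ≤ 1 - (θ:ℝ)^2/b := by
      have : (θ:ℝ)^2/b ≤ δ := by rw [div_le_iff₀ hbpos]; linarith
      linarith
    calc 1 - δ ≤ (1 - (θ:ℝ)/b)^θ := le_trans hδb hbern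
      _ = ((b:ℝ) - θ)^θ / (b:ℝ)^θ := hb2.symm
      _ ≤ (b.descFactorial θ : ℝ) / (b:ℝ)^θ := by
          apply div_le_div_of_nonneg_right hDlow (by positivity)
  have hlow : 1 - 2*δ ≤ Q := by
    have h1 : (1 - δ) * (1 - δ) ≤ ((b.descFactorial θ : ℝ) / (b:ℝ)^θ) * (1 - (b:ℝ)*x) := by
      apply mul_le_mul hratio (by linarith) (by linarith) ?_
      exact le_trans (by linarith) hratio
    have h0 : (1-δ)*(1-δ) = 1 - 2*δ + δ^2 := by ring
    have h3 : 0 ≤ δ^2 := sq_nonneg δ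
    linarith
  -- upper bound
  have hQup : Q ≤ 1 / (1 - (b:ℝ)*x) := by
    have h := binTail_upper b θ hθb x hx0.le hx1 hbx1
    have h2 := mul_le_mul_of_nonneg_left h hcpos.le
    rw [hQdef]
    refine le_trans h2 (le_of_eq ?_)
    rw [hxθ]
    calc ((θ.factorial:ℝ)/γ^θ) * β * ((b:ℝ)^θ * (γ^θ * y^θ) / θ.factorial / (1 - (b:ℝ)*x))
        = ((b:ℝ)^θ * (β * y^θ)) * (γ^θ/γ^θ) * ((θ.factorial:ℝ)/(θ.factorial:ℝ))
            * (1 / (1 - (b:ℝ)*x)) := by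
          field_simp
      _ = 1 / (1 - (b:ℝ)*x) := by
          rw [div_self hγθ, div_self hfac.ne', hE, mul_inv_cancel₀ hbθne, one_mul, mul_one,
            one_mul]
  have hup : Q ≤ 1 + 2*δ := by
    refine hQup.trans ?_
    rw [div_le_iff₀ h1bx]
    nlinarith
  -- conclude
  have harg : γ * (b : ℝ) ^ (-(θ : ℝ) / ((θ : ℝ) - 1)) = x := by rw [hxdef, hAdef]
  rw [harg]
  have hext : binTailExt b x θ = binTail b x θ := if_pos hx1
  rw [hext, ← hβdef, ← hQdef, abs_lt]
  constructor
  · linarith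
  · linarith
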